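/- arXiv:2006.04100 — 15 statements merged into one kernel-verified Lean document; each statement's English description precedes it below -/
import Mathlib

section
/- Assume additionally that E satisfies property N(2) and that no two distinct vertices are equivalent. Then the digraph has no directed circuit of length greater than 2: there is no sequence of vertices v₀, v₁, …, v_m with m ≥ 3, v_m = v₀, E v_i v_{i+1} for all 0 ≤ i < m, and the ordered pairs (v_i, v_{i+1}) for 0 ≤ i < m pairwise distinct. -/
theorem stmt_0 {V : Type*} (E : V → V → Prop)
    (hirr : ∀ u, ¬ E u u)
    (hout : ∀ u, ∃ v, E u v)
    (σ : V → Bool) (hbip : ∀ u v, E u v → σ u ≠ σ v)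
    (hN2 : ∀ u a b c, E u a → E a b → E b c → E u c)
    (hnoeq : ∀ u v : V, {x | E u x} = {x | E v x} → {x | E x u} = {x | E x v} → u = v) :
    ¬ ∃ (m : ℕ) (v : ℕ → V), 3 ≤ m ∧ v m = v 0 ∧
      (∀ i < m, E (v i) (v (i + 1))) ∧
      (∀ i < m, ∀ j < m, i ≠ j → (v i, v (i + 1)) ≠ (v j, v (j + 1))) := by
  rintro ⟨m, v, hm, hv0, hedge, hdist⟩
  have hmpos : 0 < m := by omega
  set w : ℕ → V := fun n => v (n % m) with hwdef
  have hw : ∀ n, E (w n) (w (n + 1)) := by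
    intro n
    have h1 : n % m < m := Nat.mod_lt _ hmpos
    have hedge' := hedge (n % m) h1
    by_cases h2 : n % m + 1 < m
    · have h3 : (n + 1) % m = n % m + 1 := by
        conv_lhs => rw [Nat.add_mod]
        rw [Nat.mod_eq_of_lt (show 1 < m by omega)]
        exact Nat.mod_eq_of_lt h2
      simpa [hwdef, h3] using hedge'
    · have h4 : n % m + 1 = m := by omega
      have h3 : (n + 1) % m = 0 := by
        conv_lhs => rw [Nat.add_mod]
        rw [Nat.mod_eq_of_lt (show 1 < m by omega), h4, Nat.mod_self]
      have h5 : v (n % m + 1) = v 0 := by rw [h4, hv0]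
      simp only [hwdef, h3]
      rw [← h5]; exact hedge'
  have hchain : ∀ k n, E (w n) (w (n + 1 + 2 * k)) := by
    intro k
    induction k with
    | zero => simpa using hw
    | succ k ih =>
      intro n
      have h1 := ih n
      have h2 := hw (n + 1 + 2 * k)
      have h3 := hw (n + 1 + 2 * k + 1)
      have h4 := hN2 _ _ _ _ h1 h2 h3
      have heq : n + 1 + 2 * (k + 1) = n + 1 + 2 * k + 1 + 1 := by ring
      rw [heq]; exact h4
  -- parity
  have hstep : ∀ a b : Bool, a ≠ b → b = !a := by decide
  have hσ : ∀ n, σ (w n) = if n % 2 = 0 then σ (v 0) else !(σ (v 0)) := by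
    intro n
    induction n with
    | zero =>
      rw [if_pos (by omega : 0 % 2 = 0)]
      show σ (v (0 % m)) = σ (v 0)
      rw [Nat.zero_mod]
    | succ n ih =>
      have h := hstep _ _ (hbip _ _ (hw n))
      by_cases h1 : n % 2 = 0
      · rw [if_pos h1] at ih
        rw [if_neg (show ¬ (n + 1) % 2 = 0 by omega)]
        rw [h, ih]
      · rw [if_neg h1] at ih
        rw [if_pos (show (n + 1) % 2 = 0 by omega)]
        rw [h, ih, Bool.not_not]
  have hmeven : m % 2 = 0 := by
    by_contra hodd
    have h1 : m % 2 = 1 := by omega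
    have h2 := hσ m
    rw [h1] at h2
    have h3 : w m = v 0 := by simp [hwdef, Nat.mod_self]
    rw [h3] at h2
    simp at h2
  obtain ⟨t, ht⟩ : ∃ t, m = 4 + 2 * t := ⟨(m - 4) / 2, by omega⟩
  -- key derived edges
  have hE2m1 : E (v 2) (v (m - 1)) := by
    have h := hchain t 2
    have e1 : w 2 = v 2 := by simp [hwdef, Nat.mod_eq_of_lt (show 2 < m by omega)]
    have e2 : w (2 + 1 + 2 * t) = v (m - 1) := by
      have : (2 + 1 + 2 * t) % m = m - 1 := by
        rw [Nat.mod_eq_of_lt (by omega)]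
        omega
      simp [hwdef, this]
    rwa [e1, e2] at h
  have hE30 : E (v 3) (v 0) := by
    have h := hchain t 3
    have e1 : w 3 = v 3 := by simp [hwdef, Nat.mod_eq_of_lt (show 3 < m by omega)]
    have e2 : w (3 + 1 + 2 * t) = v 0 := by
      have : (3 + 1 + 2 * t) % m = 0 := by
        have : 3 + 1 + 2 * t = m := by omega
        rw [this, Nat.mod_self]
      simp [hwdef, this]
    rwa [e1, e2] at h
  have hEm10 : E (v (m - 1)) (v 0) := by
    have h := hedge (m - 1) (by omega)
    have : m - 1 + 1 = m := by omega
    rwa [this, hv0] at h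
  have h01 : E (v 0) (v 1) := hedge 0 hmpos
  have h12 : E (v 1) (v 2) := hedge 1 (by omega)
  have h23 : E (v 2) (v 3) := hedge 2 (by omega)
  -- v 0 = v 2
  have h02 : v 0 = v 2 := by
    apply hnoeq
    · ext x
      simp only [Set.mem_setOf_eq]
      constructor
      · intro hx
        exact hN2 _ _ _ _ hE2m1 hEm10 hx
      · intro hx
        exact hN2 _ _ _ _ h01 h12 hx
    · ext x
      simp only [Set.mem_setOf_eq]
      constructor
      · intro hx
        exact hN2 _ _ _ _ hx h01 h12
      · intro hx
        exact hN2 _ _ _ _ hx hE2m1 hEm10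
  -- v 1 = v 3
  have h13 : v 1 = v 3 := by
    apply hnoeq
    · ext x
      simp only [Set.mem_setOf_eq]
      constructor
      · intro hx
        exact hN2 _ _ _ _ hE30 h01 hx
      · intro hx
        exact hN2 _ _ _ _ h12 h23 hx
    · ext x
      simp only [Set.mem_setOf_eq]
      constructor
      · intro hx
        exact hN2 _ _ _ _ hx h12 h23
      · intro hx
        exact hN2 _ _ _ _ hx hE30 h01
  exact hdist 0 (by omega) 2 (by omega) (by omega) (by simp [h02, h13])
end

section
/- Assume additionally that E satisfies property N(2). Then every directed cycle of the quotient graph has length 2: if x̄₀, x̄₁, …, x̄_m is a sequence of equivalence classes with m ≥ 1, x̄_m = x̄₀, Ē x̄_i x̄_{i+1} for all 0 ≤ i < m, and the classes x̄₀, …, x̄_{m−1} are pairwise distinct, then m = 2, so the cycle consists of the pair of symmetric edges Ē x̄₀ x̄₁ and Ē x̄₁ x̄₀. -/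
def equivSetoid {V : Type*} (E : V → V → Prop) : Setoid V where
  r u v := ({x | E u x} = {x | E v x}) ∧ ({x | E x u} = {x | E x v})
  iseqv := ⟨fun _ => ⟨rfl, rfl⟩, fun h => ⟨h.1.symm, h.2.symm⟩,
    fun h1 h2 => ⟨h1.1.trans h2.1, h1.2.trans h2.2⟩⟩

/-- The edge relation of the quotient graph: `Ebar A B` holds iff `E a b`
for every representative `a` of the class `A` and `b` of the class `B`. -/
def Ebar {V : Type*} (E : V → V → Prop) (A B : Quotient (equivSetoid E)) : Prop :=
  ∀ a b : V, Quotient.mk (equivSetoid E) a = A → Quotient.mk (equivSetoid E) b = B → E a b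

private lemma odd_path {V : Type*} {E : V → V → Prop}
    (hN2 : ∀ u a b c, E u a → E a b → E b c → E u c) :
    ∀ k (p : ℕ → V), (∀ i < 2*k+1, E (p i) (p (i+1))) → E (p 0) (p (2*k+1)) := by
  intro k
  induction k with
  | zero => intro p h; simpa using h 0 (by omega)
  | succ k ih =>
    intro p h
    have h2 := ih (fun i => p (i+2)) (fun i hi => h (i+2) (by omega))
    have he : 2*(k+1)+1 = 2*k+1+2 := by ring
    rw [he]
    exact hN2 _ _ _ _ (h 0 (by omega)) (h 1 (by omega)) h2

theorem stmt_1 {V : Type*} (E : V → V → Prop)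
    (hirr : ∀ u, ¬ E u u)
    (hout : ∀ u, ∃ v, E u v)
    (σ : V → Bool) (hbip : ∀ u v, E u v → σ u ≠ σ v)
    (hN2 : ∀ u a b c, E u a → E a b → E b c → E u c)
    (m : ℕ) (x : ℕ → Quotient (equivSetoid E))
    (hm : 1 ≤ m) (hclosed : x m = x 0)
    (hedges : ∀ i < m, Ebar E (x i) (x (i + 1)))
    (hdistinct : ∀ i < m, ∀ j < m, i ≠ j → x i ≠ x j) :
    m = 2 ∧ Ebar E (x 0) (x 1) ∧ Ebar E (x 1) (x 0) := by
  set a : ℕ → V := fun i => (x i).out with ha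
  have hmk : ∀ i, Quotient.mk (equivSetoid E) (a i) = x i := fun i => Quotient.out_eq _
  have ham : a m = a 0 := by simp [ha, hclosed]
  have hE : ∀ i < m, E (a i) (a (i+1)) :=
    fun i hi => hedges i hi (a i) (a (i+1)) (hmk i) (hmk (i+1))
  -- parity along the cycle
  have hpar : ∀ i ≤ m, σ (a i) = if i % 2 = 0 then σ (a 0) else !(σ (a 0)) := by
    intro i
    induction i with
    | zero => simp
    | succ i ih =>
      intro hi
      have hne := hbip _ _ (hE i (by omega))
      have hih := ih (by omega)
      by_cases hp : i % 2 = 0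
      · have h1 : (i+1) % 2 = 1 := by omega
        rw [h1]; rw [if_pos hp] at hih; rw [hih] at hne
        simp only [if_neg (by omega : ¬ (1:ℕ) = 0)]
        revert hne; cases σ (a (i+1)) <;> cases σ (a 0) <;> simp
      · have h1 : (i+1) % 2 = 0 := by omega
        rw [h1]; rw [if_neg hp] at hih; rw [hih] at hne
        simp only [if_pos rfl]
        revert hne; cases σ (a (i+1)) <;> cases σ (a 0) <;> simp
  have hmeven : m % 2 = 0 := by
    by_contra hodd
    have := hpar m le_rfl
    rw [ham, if_neg hodd] at this
    exact absurd this (by cases σ (a 0) <;> simp)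
  -- main case analysis
  have hm2 : m = 2 := by
    by_contra hne2
    have hm4 : 4 ≤ m := by omega
    -- wrap-around edges
    have hb : ∀ j, E (a (j % m)) (a ((j+1) % m)) := by
      intro j
      have hlt : j % m < m := Nat.mod_lt _ (by omega)
      rcases Nat.lt_or_ge (j % m) (m - 1) with h | h
      · have e1 : (j+1) % m = j % m + 1 := by
          conv_lhs => rw [Nat.add_mod]
          rw [Nat.mod_eq_of_lt (show 1 < m by omega)]
          exact Nat.mod_eq_of_lt (by omega)
        rw [e1]; exact hE _ (by omega)
      · have hj : j % m = m - 1 := by omega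
        have e1 : (j+1) % m = 0 := by
          conv_lhs => rw [Nat.add_mod]
          rw [Nat.mod_eq_of_lt (show 1 < m by omega), hj]
          simp [Nat.sub_add_cancel (show 1 ≤ m by omega)]
        rw [hj, e1, ← ham]
        have := hE (m-1) (by omega)
        rwa [Nat.sub_add_cancel (show 1 ≤ m by omega)] at this
    obtain ⟨k, hk⟩ : ∃ k, m - 1 = 2*k+1 := ⟨(m-2)/2, by omega⟩
    have h3m : 3 % m = 3 := Nat.mod_eq_of_lt (by omega)
    have hm1 : (m+1) % m = 1 := by
      rw [Nat.add_mod, Nat.mod_self, Nat.mod_eq_of_lt (show 1 < m by omega)]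
      simp [Nat.mod_eq_of_lt (show 1 < m by omega)]
    -- x 1 = x 3
    have hx13 : x 1 = x 3 := by
      rw [← hmk 1, ← hmk 3]
      apply Quotient.sound
      constructor
      · ext z
        simp only [Set.mem_setOf_eq]
        constructor
        · -- E (a 1) z → E (a 3) z : odd path a3, a4, ..., a0, a1, z
          intro hz
          have hp := odd_path hN2 k (fun i => if i ≤ m - 2 then a ((i+3) % m) else z) ?_
          · simpa [show (0:ℕ) ≤ m - 2 by omega, h3m,
              show ¬ (2*k+1 ≤ m - 2) by omega] using hp
          · intro i hi
            rcases Nat.lt_or_ge i (m - 2) with h | h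
            · simp only [if_pos (show i ≤ m - 2 by omega),
                if_pos (show i + 1 ≤ m - 2 by omega)]
              have := hb (i+3)
              rwa [show i + 3 + 1 = i + 1 + 3 by ring] at this
            · have hi2 : i = m - 2 := by omega
              simp only [if_pos (show i ≤ m - 2 by omega),
                if_neg (show ¬ (i + 1 ≤ m - 2) by omega)]
              rw [hi2, show m - 2 + 3 = m + 1 by omega, hm1]
              exact hz
        · -- E (a 3) z → E (a 1) z
          intro hz
          exact hN2 _ _ _ _ (hE 1 (by omega)) (hE 2 (by omega)) hz
      · ext z
        simp only [Set.mem_setOf_eq]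
        constructor
        · -- E z (a 1) → E z (a 3)
          intro hz
          exact hN2 _ _ _ _ hz (hE 1 (by omega)) (hE 2 (by omega))
        · -- E z (a 3) → E z (a 1) : odd path z, a3, a4, ..., a0, a1
          intro hz
          have hp := odd_path hN2 k (fun i => if i = 0 then z else a ((i+2) % m)) ?_
          · simpa [show 2*k+1 ≠ 0 by omega,
              show 2*k+1+2 = m + 1 by omega, hm1] using hp
          · intro i hi
            rcases eq_or_ne i 0 with h | h
            · subst h
              simpa [h3m] using hz
            · simp only [if_neg h, if_neg (show i + 1 ≠ 0 by omega)]
              have := hb (i+2)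
              rwa [show i + 2 + 1 = i + 1 + 2 by ring] at this
    exact hdistinct 1 (by omega) 3 (by omega) (by omega) hx13
  refine ⟨hm2, hedges 0 (by omega), ?_⟩
  have := hedges 1 (by omega)
  rwa [show (1:ℕ) + 1 = 2 by rfl, ← hm2, hclosed] at this
end

section
/- Assume additionally that E satisfies properties N(1) and N(2). Let u and v be independent vertices (¬E u v and ¬E v u) with no common out-neighbour (N(u) ∩ N(v) = ∅). Then for every vertex w, it is not the case that both u and v are strongly connected to w; i.e. ¬(Relation.TransGen E u w ∧ Relation.TransGen E v w). -/
theorem stmt_2 {V : Type*} (E : V → V → Prop)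
    (hirr : ∀ u, ¬ E u u)
    (hout : ∀ u, ∃ v, E u v)
    (σ : V → Bool) (hbip : ∀ u v, E u v → σ u ≠ σ v)
    (hN1 : ∀ u v : V, u ≠ v → ¬ E u v → ¬ E v u →
      {x | E u x} ∩ {x | ∃ y, E v y ∧ E y x} = ∅ ∧
      {x | E v x} ∩ {x | ∃ y, E u y ∧ E y x} = ∅)
    (hN2 : ∀ u a b c, E u a → E a b → E b c → E u c)
    (u v : V) (huv : ¬ E u v) (hvu : ¬ E v u)
    (hdisj : {x | E u x} ∩ {x | E v x} = ∅) :
    ∀ w : V, ¬ (Relation.TransGen E u w ∧ Relation.TransGen E v w) := by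
  have key : ∀ a w : V, Relation.TransGen E a w →
      (σ a ≠ σ w ∧ E a w) ∨ (σ a = σ w ∧ ∃ y, E a y ∧ E y w) := by
    intro a w h
    induction h with
    | single h => exact Or.inl ⟨hbip _ _ h, h⟩
    | @tail b c hab hbc ih =>
      rcases ih with ⟨hσ, hab'⟩ | ⟨hσ, y, hay, hyb⟩
      · refine Or.inr ⟨?_, b, hab', hbc⟩
        have h2 := hbip _ _ hbc
        revert hσ h2
        cases σ a <;> cases σ b <;> cases σ c <;> simp
      · refine Or.inl ⟨?_, hN2 a y b c hay hyb hbc⟩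
        have h2 := hbip _ _ hbc
        revert hσ h2
        cases σ a <;> cases σ b <;> cases σ c <;> simp
  have hne : u ≠ v := by
    rintro rfl
    obtain ⟨x, hx⟩ := hout u
    exact Set.eq_empty_iff_forall_notMem.mp hdisj x ⟨hx, hx⟩
  rintro w ⟨hu, hv⟩
  rcases key u w hu with ⟨_, h1⟩ | ⟨_, h1⟩ <;>
    rcases key v w hv with ⟨_, h2⟩ | ⟨_, h2⟩
  · exact Set.eq_empty_iff_forall_notMem.mp hdisj w ⟨h1, h2⟩
  · exact Set.eq_empty_iff_forall_notMem.mp (hN1 u v hne huv hvu).1 w ⟨h1, h2⟩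
  · exact Set.eq_empty_iff_forall_notMem.mp (hN1 u v hne huv hvu).2 w ⟨h2, h1⟩
  · obtain ⟨x, hwx⟩ := hout w
    obtain ⟨y, huy, hyw⟩ := h1
    obtain ⟨z, hvz, hzw⟩ := h2
    exact Set.eq_empty_iff_forall_notMem.mp hdisj x
      ⟨hN2 u y w x huy hyw hwx, hN2 v z w x hvz hzw hwx⟩
end

section
/- Assume additionally that E satisfies properties N(2) and N(3). Let u and v be vertices that are not equivalent, have a common out-neighbour (N(u) ∩ N(v) ≠ ∅), and such that there is no directed path of length 2 from u to v nor from v to u (u ∉ N(N(v)) and v ∉ N(N(u))). Then at least one of u and v is not an endpoint of a symmetric edge: ¬(∃ w, E u w ∧ E w u) or ¬(∃ w, E v w ∧ E w v). -/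
theorem stmt_3 {V : Type*} (E : V → V → Prop)
    (hirr : ∀ u, ¬ E u u)
    (hout : ∀ u, ∃ v, E u v)
    (σ : V → Bool) (hbip : ∀ u v, E u v → σ u ≠ σ v)
    (hN2 : ∀ u a b c, E u a → E a b → E b c → E u c)
    (hN3 : ∀ u v : V, u ≠ v → ({x | E u x} ∩ {x | E v x}).Nonempty →
      ¬ (∃ y, E v y ∧ E y u) → ¬ (∃ y, E u y ∧ E y v) →
      ({x | E x u} = {x | E x v} ∧
        ({x | E u x} ⊆ {x | E v x} ∨ {x | E v x} ⊆ {x | E u x})))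
    (u v : V)
    (hne : ¬ ({x | E u x} = {x | E v x} ∧ {x | E x u} = {x | E x v}))
    (hcommon : ({x | E u x} ∩ {x | E v x}).Nonempty)
    (hpath1 : ¬ (∃ y, E v y ∧ E y u))
    (hpath2 : ¬ (∃ y, E u y ∧ E y v)) :
    ¬ (∃ w, E u w ∧ E w u) ∨ ¬ (∃ w, E v w ∧ E w v) := by
  have hne' : u ≠ v := by
    rintro rfl
    exact hne ⟨rfl, rfl⟩
  obtain ⟨hin, hcase⟩ := hN3 u v hne' hcommon hpath1 hpath2
  rcases hcase with hsub | hsub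
  · left
    rintro ⟨w, huw, hwu⟩
    have hwv : E w v := by
      have : w ∈ {x | E x v} := hin ▸ hwu
      exact this
    exact hpath2 ⟨w, huw, hwv⟩
  · right
    rintro ⟨w, hvw, hwv⟩
    have hwu : E w u := by
      have : w ∈ {x | E x u} := hin.symm ▸ hwv
      exact this
    exact hpath1 ⟨w, hvw, hwu⟩
end

section
/- Assume additionally that E satisfies property N(2). Let α₁ and α₂ be distinct vertices with σ α₁ = σ α₂ (the same color), and suppose there exist vertices β₁, β₂ (not necessarily distinct) with E α₁ β₂, E α₂ β₁, E β₂ α₂, and E β₁ α₁. Then α₁ and α₂ are equivalent: N(α₁) = N(α₂) and N⁻(α₁) = N⁻(α₂). -/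
theorem stmt_7 {V : Type*} (E : V → V → Prop)
    (hirr : ∀ u, ¬ E u u)
    (hout : ∀ u, ∃ v, E u v)
    (σ : V → Bool) (hbip : ∀ u v, E u v → σ u ≠ σ v)
    (hN2 : ∀ u a b c, E u a → E a b → E b c → E u c)
    (α₁ α₂ : V) (hne : α₁ ≠ α₂) (hcol : σ α₁ = σ α₂)
    (β₁ β₂ : V)
    (h1 : E α₁ β₂) (h2 : E α₂ β₁) (h3 : E β₂ α₂) (h4 : E β₁ α₁) :
    {x | E α₁ x} = {x | E α₂ x} ∧ {x | E x α₁} = {x | E x α₂} := by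
  constructor
  · ext x
    exact ⟨fun h => hN2 α₂ β₁ α₁ x h2 h4 h, fun h => hN2 α₁ β₂ α₂ x h1 h3 h⟩
  · ext x
    exact ⟨fun h => hN2 x α₁ β₂ α₂ h h1 h3, fun h => hN2 x α₂ β₁ α₁ h h2 h4⟩
end

section
/- Assume additionally that E satisfies property N(2) and that no two distinct vertices are equivalent. Then for every vertex u there is at most one vertex v such that both E u v and E v u hold: if E u v₁, E v₁ u, E u v₂, and E v₂ u, then v₁ = v₂. -/
theorem stmt_8 {V : Type*} (E : V → V → Prop)
    (hirr : ∀ u, ¬ E u u)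
    (hout : ∀ u, ∃ v, E u v)
    (σ : V → Bool) (hbip : ∀ u v, E u v → σ u ≠ σ v)
    (hN2 : ∀ u a b c, E u a → E a b → E b c → E u c)
    (hnoeq : ∀ u v : V, {x | E u x} = {x | E v x} → {x | E x u} = {x | E x v} → u = v)
    (u v₁ v₂ : V)
    (h1 : E u v₁) (h2 : E v₁ u) (h3 : E u v₂) (h4 : E v₂ u) :
    v₁ = v₂ := by
  apply hnoeq
  · ext x
    exact ⟨fun h => hN2 v₂ u v₁ x h4 h1 h, fun h => hN2 v₁ u v₂ x h2 h3 h⟩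
  · ext x
    exact ⟨fun h => hN2 x v₁ u v₂ h h2 h3, fun h => hN2 x v₂ u v₁ h h4 h1⟩
end

section
/- Assume additionally that E satisfies property N(2) and that no two distinct vertices are equivalent. Then the digraph has no directed circuit of length four: if a, b, c, d are vertices with E a b, E b c, E c d, and E d a, then a = c and b = d (equivalently, the four edges (a,b), (b,c), (c,d), (d,a) cannot be pairwise distinct). -/
theorem stmt_9 {V : Type*} (E : V → V → Prop)
    (hirr : ∀ u, ¬ E u u)
    (hout : ∀ u, ∃ v, E u v)
    (σ : V → Bool) (hbip : ∀ u v, E u v → σ u ≠ σ v)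
    (hN2 : ∀ u a b c, E u a → E a b → E b c → E u c)
    (hnoeq : ∀ u v : V, {x | E u x} = {x | E v x} → {x | E x u} = {x | E x v} → u = v)
    (a b c d : V)
    (h1 : E a b) (h2 : E b c) (h3 : E c d) (h4 : E d a) :
    a = c ∧ b = d := by
  constructor
  · apply hnoeq
    · ext x
      exact ⟨fun h => hN2 c d a x h3 h4 h, fun h => hN2 a b c x h1 h2 h⟩
    · ext x
      exact ⟨fun h => hN2 x a b c h h1 h2, fun h => hN2 x c d a h h3 h4⟩
  · apply hnoeq
    · ext x
      exact ⟨fun h => hN2 d a b x h4 h1 h, fun h => hN2 b c d x h2 h3 h⟩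
    · ext x
      exact ⟨fun h => hN2 x b c d h h2 h3, fun h => hN2 x d a b h h4 h1⟩
end

section
/- Assume additionally that E satisfies property N(2). Then for any two vertices u and v, if N(u) ∩ N(v) = ∅, then N(N(u)) ∩ N(N(v)) = ∅. -/
theorem stmt_10 {V : Type*} (E : V → V → Prop)
    (hirr : ∀ u, ¬ E u u)
    (hout : ∀ u, ∃ v, E u v)
    (σ : V → Bool) (hbip : ∀ u v, E u v → σ u ≠ σ v)
    (hN2 : ∀ u a b c, E u a → E a b → E b c → E u c)
    (u v : V) (hdisj : {x | E u x} ∩ {x | E v x} = ∅) :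
    {x | ∃ y, E u y ∧ E y x} ∩ {x | ∃ y, E v y ∧ E y x} = ∅ := by
  ext x
  simp only [Set.mem_inter_iff, Set.mem_setOf_eq, Set.mem_empty_iff_false, iff_false]
  rintro ⟨⟨y, huy, hyx⟩, ⟨z, hvz, hzx⟩⟩
  obtain ⟨w, hxw⟩ := hout x
  have hw : w ∈ ({x | E u x} ∩ {x | E v x} : Set V) :=
    ⟨hN2 u y x w huy hyx hxw, hN2 v z x w hvz hzx hxw⟩
  rw [hdisj] at hw
  exact hw
end

section
/- Assume additionally that E satisfies property N(2). Let u, v, w be vertices all of the same color (σ u = σ v = σ w). If u and v have no common out-neighbour (N(u) ∩ N(v) = ∅), then it is not the case that both u and v are strongly connected to w; i.e. ¬(Relation.TransGen E u w ∧ Relation.TransGen E v w). -/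
theorem stmt_11 {V : Type*} (E : V → V → Prop)
    (hirr : ∀ u, ¬ E u u)
    (hout : ∀ u, ∃ v, E u v)
    (σ : V → Bool) (hbip : ∀ u v, E u v → σ u ≠ σ v)
    (hN2 : ∀ u a b c, E u a → E a b → E b c → E u c)
    (u v w : V) (hcol1 : σ u = σ v) (hcol2 : σ v = σ w)
    (hdisj : {x | E u x} ∩ {x | E v x} = ∅) :
    ¬ (Relation.TransGen E u w ∧ Relation.TransGen E v w) := by
  have key : ∀ x y : V, Relation.TransGen E x y →
      ((σ x = σ y → ∀ c, E y c → E x c) ∧ (σ x ≠ σ y → E x y)) := by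
    intro x y h
    induction h with
    | single h => exact ⟨fun he => absurd he (hbip _ _ h), fun _ => h⟩
    | tail hxb hbw ih =>
      rename_i b w'
      constructor
      · intro he c hc
        have hne : σ x ≠ σ b := by
          have := hbip _ _ hbw; intro h'; exact this (h'.symm.trans he)
        exact hN2 x b w' c (ih.2 hne) hbw hc
      · intro hne
        have he : σ x = σ b := by
          have h1 := hbip _ _ hbw
          rcases Bool.eq_or_eq_not (σ x) (σ b) with h | h
          · exact h
          · exfalso
            apply hne
            cases hσb : σ b <;> cases hσw : σ w' <;>
              simp_all
        exact ih.1 he _ hbw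
  rintro ⟨hu, hv⟩
  obtain ⟨c, hc⟩ := hout w
  have h1 : E u c := (key u w hu).1 (hcol1.trans hcol2) c hc
  have h2 : E v c := (key v w hv).1 hcol2 c hc
  have : c ∈ {x | E u x} ∩ {x | E v x} := ⟨h1, h2⟩
  simp [hdisj] at this
end

section
/- Assume additionally that E satisfies property N(2). Let u and v be vertices of the same color (σ u = σ v) with no common out-neighbour (N(u) ∩ N(v) = ∅). Then for every vertex w, it is not the case that both u and v are strongly connected to w; i.e. ¬(Relation.TransGen E u w ∧ Relation.TransGen E v w). -/
theorem stmt_12 {V : Type*} (E : V → V → Prop)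
    (hirr : ∀ u, ¬ E u u)
    (hout : ∀ u, ∃ v, E u v)
    (σ : V → Bool) (hbip : ∀ u v, E u v → σ u ≠ σ v)
    (hN2 : ∀ u a b c, E u a → E a b → E b c → E u c)
    (u v : V) (hcol : σ u = σ v)
    (hdisj : {x | E u x} ∩ {x | E v x} = ∅) :
    ∀ w : V, ¬ (Relation.TransGen E u w ∧ Relation.TransGen E v w) := by
  have short : ∀ x w, Relation.TransGen E x w → E x w ∨ ∃ m, E x m ∧ E m w := by
    intro x w h
    induction h with
    | single h => exact Or.inl h
    | tail _ hbw ih =>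
      rcases ih with h | ⟨m, h1, h2⟩
      · exact Or.inr ⟨_, h, hbw⟩
      · exact Or.inl (hN2 _ _ _ _ h1 h2 hbw)
  have hd : ∀ x, ¬ (E u x ∧ E v x) := by
    intro x hx
    have : x ∈ ({x | E u x} ∩ {x | E v x} : Set V) := ⟨hx.1, hx.2⟩
    rw [hdisj] at this
    exact this
  intro w ⟨hu, hv⟩
  rcases short u w hu with h1 | ⟨a, ha1, ha2⟩ <;> rcases short v w hv with h2 | ⟨b, hb1, hb2⟩
  · exact hd w ⟨h1, h2⟩
  · have c1 := hbip _ _ h1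
    have c2 := hbip _ _ hb1
    have c3 := hbip _ _ hb2
    rw [hcol] at c1
    rcases Bool.eq_or_eq_not (σ v) (σ w) with h | h
    · exact c1 h
    · simp [h] at c2 c3; rw [c2] at c3; simp at c3
  · have c1 := hbip _ _ h2
    have c2 := hbip _ _ ha1
    have c3 := hbip _ _ ha2
    rw [← hcol] at c1
    rcases Bool.eq_or_eq_not (σ u) (σ w) with h | h
    · exact c1 h
    · simp [h] at c2 c3; rw [c2] at c3; simp at c3
  · obtain ⟨c, hc⟩ := hout w
    exact hd c ⟨hN2 _ _ _ _ ha1 ha2 hc, hN2 _ _ _ _ hb1 hb2 hc⟩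
end

section
/- Assume additionally that E satisfies properties N(1) and N(2). Let u and v be vertices of different colors (σ u ≠ σ v) that are independent (¬E u v and ¬E v u). Then for every vertex w, it is not the case that both u and v are strongly connected to w; i.e. ¬(Relation.TransGen E u w ∧ Relation.TransGen E v w). -/
theorem stmt_14 {V : Type*} (E : V → V → Prop)
    (hirr : ∀ u, ¬ E u u)
    (hout : ∀ u, ∃ v, E u v)
    (σ : V → Bool) (hbip : ∀ u v, E u v → σ u ≠ σ v)
    (hN1 : ∀ u v : V, u ≠ v → ¬ E u v → ¬ E v u →
      {x | E u x} ∩ {x | ∃ y, E v y ∧ E y x} = ∅ ∧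
      {x | E v x} ∩ {x | ∃ y, E u y ∧ E y x} = ∅)
    (hN2 : ∀ u a b c, E u a → E a b → E b c → E u c)
    (u v : V) (hcol : σ u ≠ σ v) (huv : ¬ E u v) (hvu : ¬ E v u) :
    ∀ w : V, ¬ (Relation.TransGen E u w ∧ Relation.TransGen E v w) := by
  have key : ∀ a w : V, Relation.TransGen E a w → E a w ∨ ∃ y, E a y ∧ E y w := by
    intro a w h
    induction h with
    | single he => exact Or.inl he
    | tail _ hbc ih =>
      rcases ih with h1 | ⟨y, hy1, hy2⟩
      · exact Or.inr ⟨_, h1, hbc⟩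
      · exact Or.inl (hN2 _ _ _ _ hy1 hy2 hbc)
  have hne : u ≠ v := fun h => hcol (h ▸ rfl)
  intro w ⟨hu, hv⟩
  rcases key u w hu with h1 | ⟨y, hy1, hy2⟩ <;> rcases key v w hv with h2 | ⟨z, hz1, hz2⟩
  · have bool : ∀ x y z : Bool, x ≠ z → y ≠ z → x = y := by decide
    exact hcol (bool _ _ _ (hbip _ _ h1) (hbip _ _ h2))
  · have := (hN1 u v hne huv hvu).1
    exact Set.eq_empty_iff_forall_notMem.mp this w ⟨h1, z, hz1, hz2⟩
  · have := (hN1 u v hne huv hvu).2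
    exact Set.eq_empty_iff_forall_notMem.mp this w ⟨h2, y, hy1, hy2⟩
  · have bool : ∀ x y w a b : Bool, x ≠ a → a ≠ w → y ≠ b → b ≠ w → x = y := by decide
    exact hcol (bool _ _ _ _ _ (hbip _ _ hy1) (hbip _ _ hy2) (hbip _ _ hz1) (hbip _ _ hz2))
end

section
/- If E satisfies property N(2), then the quotient edge relation Ē also satisfies property N(2) (bitransitivity): for equivalence classes ā, b̄, c̄, d̄, if Ē ā b̄, Ē b̄ c̄, and Ē c̄ d̄, then Ē ā d̄. -/
theorem stmt_16 {V : Type*} (E : V → V → Prop)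
    (hirr : ∀ u, ¬ E u u)
    (hout : ∀ u, ∃ v, E u v)
    (hN2 : ∀ u a b c, E u a → E a b → E b c → E u c)
    (A B C D : Quotient (equivSetoid E))
    (h1 : Ebar E A B) (h2 : Ebar E B C) (h3 : Ebar E C D) :
    Ebar E A D := by
  intro a d ha hd
  obtain ⟨b, hb⟩ := Quotient.exists_rep B
  obtain ⟨c, hc⟩ := Quotient.exists_rep C
  exact hN2 a b c d (h1 a b ha hb) (h2 b c hb hc) (h3 c d hc hd)
end

section
/- Assume additionally that E satisfies property N(2) and that no two distinct vertices are equivalent. Define the edge relation E' obtained by deleting all symmetric edges: E' u v holds iff E u v and ¬E v u. Then E' is acyclic: there is no vertex u with Relation.TransGen E' u u. -/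
theorem stmt_17 {V : Type*} (E : V → V → Prop)
    (hirr : ∀ u, ¬ E u u)
    (hout : ∀ u, ∃ v, E u v)
    (σ : V → Bool) (hbip : ∀ u v, E u v → σ u ≠ σ v)
    (hN2 : ∀ u a b c, E u a → E a b → E b c → E u c)
    (hnoeq : ∀ u v : V, {x | E u x} = {x | E v x} → {x | E x u} = {x | E x v} → u = v) :
    ¬ ∃ u : V, Relation.TransGen (fun a b => E a b ∧ ¬ E b a) u u := by
  rintro ⟨u, hu⟩
  have key : ∀ a b, Relation.TransGen (fun a b => E a b ∧ ¬ E b a) a b →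
      (σ a ≠ σ b ∧ E a b) ∨ (σ a = σ b ∧ ∃ x, E a x ∧ E x b) := by
    intro a b h
    induction h with
    | single h => exact Or.inl ⟨hbip _ _ h.1, h.1⟩
    | @tail b c _ hbc ih =>
      rcases ih with ⟨hne, hab⟩ | ⟨heq, x, hax, hxb⟩
      · refine Or.inr ⟨?_, b, hab, hbc.1⟩
        have h2 := hbip _ _ hbc.1
        revert hne h2
        cases σ a <;> cases σ b <;> cases σ c <;> simp
      · exact Or.inl ⟨heq ▸ hbip _ _ hbc.1, hN2 _ _ _ _ hax hxb hbc.1⟩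
  cases hu with
  | single h => exact hirr u h.1
  | @tail b _ hub hbu =>
    rcases key _ _ hub with ⟨_, hEub⟩ | ⟨heq, _⟩
    · exact hbu.2 hEub
    · exact hbip _ _ hbu.1 heq.symm
end

section
/- Assume additionally that E satisfies property N(2). Let u and v be vertices of the same color (σ u = σ v) such that v is reachable from u by a directed walk of positive length (Relation.TransGen E u v). Then N(v) ⊆ N(u) and N⁻(u) ⊆ N⁻(v). -/
theorem stmt_18 {V : Type*} (E : V → V → Prop)
    (hirr : ∀ u, ¬ E u u)
    (hout : ∀ u, ∃ v, E u v)
    (σ : V → Bool) (hbip : ∀ u v, E u v → σ u ≠ σ v)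
    (hN2 : ∀ u a b c, E u a → E a b → E b c → E u c)
    (u v : V) (hcol : σ u = σ v) (hreach : Relation.TransGen E u v) :
    {x | E v x} ⊆ {x | E u x} ∧ {x | E x u} ⊆ {x | E x v} := by
  suffices h : ∀ w, Relation.TransGen E u w →
      (σ u ≠ σ w → E u w) ∧ (σ u = σ w → (∀ x, E w x → E u x) ∧ ∀ y, E y u → E y w) by
    obtain ⟨_, h2⟩ := h v hreach
    exact ⟨fun x hx => (h2 hcol).1 x hx, fun y hy => (h2 hcol).2 y hy⟩
  intro w hw
  induction hw with
  | single h => exact ⟨fun _ => h, fun hc => absurd hc (hbip _ _ h)⟩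
  | @tail b v' hub hbv ih =>
    by_cases hc : σ u = σ b
    · have heuv : E u v' := (ih.2 hc).1 _ hbv
      refine ⟨fun _ => heuv, fun hc' => absurd hc' ?_⟩
      rw [hc]; exact hbip _ _ hbv
    · have heub : E u b := ih.1 hc
      have hcv : σ u = σ v' := by
        have h1 := hbip _ _ hbv
        cases hσu : σ u <;> cases hσb : σ b <;> cases hσv : σ v' <;>
          simp_all
      exact ⟨fun h => absurd hcv h, fun _ =>
        ⟨fun x hx => hN2 u b v' x heub hbv hx, fun y hy => hN2 y u b v' hy heub hbv⟩⟩
end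

section
/- Assume additionally that E satisfies property N(2). Let u and v be vertices of the same color (σ u = σ v) that lie on a common closed directed walk, i.e. Relation.TransGen E u v and Relation.TransGen E v u. Then u and v are equivalent: N(u) = N(v) and N⁻(u) = N⁻(v). -/
theorem stmt_19 {V : Type*} (E : V → V → Prop)
    (hirr : ∀ u, ¬ E u u)
    (hout : ∀ u, ∃ v, E u v)
    (σ : V → Bool) (hbip : ∀ u v, E u v → σ u ≠ σ v)
    (hN2 : ∀ u a b c, E u a → E a b → E b c → E u c)
    (u v : V) (hcol : σ u = σ v)
    (huv : Relation.TransGen E u v) (hvu : Relation.TransGen E v u) :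
    {x | E u x} = {x | E v x} ∧ {x | E x u} = {x | E x v} := by
  have bhelp : ∀ x y z : Bool, x ≠ y → y ≠ z → x = z := by decide
  have key : ∀ a b, Relation.TransGen E a b →
      (σ a ≠ σ b ∧ E a b) ∨ (σ a = σ b ∧ ∀ x, E b x → E a x) := by
    intro a b h
    induction h with
    | single hab => exact Or.inl ⟨hbip _ _ hab, hab⟩
    | tail hab hbc ih =>
      rcases ih with ⟨hne, hE⟩ | ⟨heq, hH⟩
      · refine Or.inr ⟨?_, fun x hx => hN2 _ _ _ _ hE hbc hx⟩
        exact bhelp _ _ _ hne (hbip _ _ hbc)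
      · refine Or.inl ⟨?_, hH _ hbc⟩
        intro h
        exact hbip _ _ hbc (heq ▸ h ▸ rfl)
  have hodd : ∀ a b, Relation.TransGen E a b → σ a ≠ σ b → E a b := by
    intro a b h hne
    rcases key a b h with ⟨_, hE⟩ | ⟨heq, _⟩
    · exact hE
    · exact absurd heq hne
  have heven : ∀ a b, Relation.TransGen E a b → σ a = σ b → ∀ x, E b x → E a x := by
    intro a b h heq
    rcases key a b h with ⟨hne, _⟩ | ⟨_, hH⟩
    · exact absurd heq hne
    · exact hH
  constructor
  · ext x
    constructor
    · intro hx; exact heven v u hvu hcol.symm x hx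
    · intro hx; exact heven u v huv hcol x hx
  · ext x
    constructor
    · intro hx
      exact hodd x v (Relation.TransGen.head hx huv)
        (fun h => hbip _ _ hx (h.trans hcol.symm))
    · intro hx
      exact hodd x u (Relation.TransGen.head hx hvu)
        (fun h => hbip _ _ hx (h.trans hcol))
end
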